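/- Let G be a lattice-ordered group, I a nonempty set, (x_i)_{i∈I} a family in G admitting a supremum, and a ∈ G. Then the family (a ∧ x_i)_{i∈I} admits a supremum, and a ∧ (sup_{i∈I} x_i) = sup_{i∈I} (a ∧ x_i). -/
import Mathlib


theorem stmt2 {G : Type*} [Lattice G] [AddCommGroup G]
    [CovariantClass G G (· + ·) (· ≤ ·)]
    {ι : Type*} [Nonempty ι] (x : ι → G) (s : G)
    (hs : IsLUB (Set.range x) s) (a : G) :
    IsLUB (Set.range fun i => a ⊓ x i) (a ⊓ s) := by
  constructor
  · rintro _ ⟨i, rfl⟩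
    exact inf_le_inf_left a (hs.1 ⟨i, rfl⟩)
  · rintro b hb
    have key : ∀ i, x i ≤ b + (a ⊔ s) - a := by
      intro i
      have h1 : a ⊓ x i ≤ b := hb ⟨i, rfl⟩
      have h2 : a + x i - (a ⊔ x i) = a ⊓ x i := by
        rw [sub_eq_iff_eq_add, inf_add_sup]
      have h3 : a ⊔ x i ≤ a ⊔ s := sup_le_sup_left (hs.1 ⟨i, rfl⟩) a
      have : a + x i - (a ⊔ s) ≤ a ⊓ x i := by
        rw [← h2]
        exact sub_le_sub_left h3 _
      have h4 := this.trans h1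
      rw [le_sub_iff_add_le, add_comm]
      rwa [sub_le_iff_le_add] at h4
    have hsle : s ≤ b + (a ⊔ s) - a := hs.2 (by rintro _ ⟨i, rfl⟩; exact key i)
    have : a + s - (a ⊔ s) ≤ b := by
      rw [le_sub_iff_add_le, add_comm] at hsle
      exact sub_le_iff_le_add.mpr hsle
    rwa [sub_eq_iff_eq_add.mpr (inf_add_sup a s).symm] at this
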